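/- Two relative Rota-Baxter operators $T_1, T_2:V\to\mathfrak{L}$ are compatible (i.e., every linear combination $\lambda T_1 + \eta T_2$ is a relative Rota-Baxter operator) if and only if for all $u,v,w\in V$ and $\{i,j\}=\{1,2\}$: $\{T_iu,T_iv,T_jw\}+\{T_iu,T_jv,T_iw\}+\{T_ju,T_iv,T_iw\} = T_i(l(T_iu,T_jv)w+m(T_iu,T_jw)v+r(T_iv,T_jw)u) + T_i(l(T_ju,T_iv)w+m(T_ju,T_iw)v+r(T_jv,T_iw)u) + T_j(l(T_iu,T_iv)w+m(T_iu,T_iw)v+r(T_iv,T_iw)u)$. -/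
import Mathlib


def IsTrilin (K : Type*) [Field K] {L M : Type*} [AddCommGroup L] [Module K L]
    [AddCommGroup M] [Module K M] (t : L → L → L → M) : Prop :=
  (∀ y z, IsLinearMap K fun x => t x y z) ∧ (∀ x z, IsLinearMap K fun y => t x y z) ∧
    (∀ x y, IsLinearMap K fun z => t x y z)

def LTSIdent {L : Type*} [AddCommGroup L] (t : L → L → L → L) : Prop :=
  (∀ a b c d e, t a b (t c d e) =
      t (t a b c) d e - t (t a b d) c e - t (t a b e) c d + t (t a b e) d c) ∧
  (∀ a b c d e, t a (t b c d) e =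
      t (t a b c) d e - t (t a c b) d e - t (t a d b) c e + t (t a d c) b e)

def IsLTS (K : Type*) [Field K] {L : Type*} [AddCommGroup L] [Module K L]
    (t : L → L → L → L) : Prop := IsTrilin K t ∧ LTSIdent t

def sd {L V : Type*} [AddCommGroup L] [AddCommGroup V]
    (t : L → L → L → L) (l m r : L → L → V → V) :
    L × V → L × V → L × V → L × V :=
  fun p q s => (t p.1 q.1 s.1, l p.1 q.1 s.2 + m p.1 s.1 q.2 + r q.1 s.1 p.2)

def IsRep (K : Type*) [Field K] {L V : Type*} [AddCommGroup L] [Module K L]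
    [AddCommGroup V] [Module K V] (t : L → L → L → L) (l m r : L → L → V → V) : Prop :=
  IsLTS K (sd t l m r)

def IsRRB {K : Type*} [Field K] {L V : Type*} [AddCommGroup L] [Module K L]
    [AddCommGroup V] [Module K V] (t : L → L → L → L) (l m r : L → L → V → V)
    (T : V →ₗ[K] L) : Prop :=
  ∀ u v w, t (T u) (T v) (T w) =
    T (l (T u) (T v) w + m (T u) (T w) v + r (T v) (T w) u)

def IsRB {K : Type*} [Field K] {L : Type*} [AddCommGroup L] [Module K L]
    (t : L → L → L → L) (R : L →ₗ[K] L) : Prop :=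
  ∀ x y z, t (R x) (R y) (R z) =
    R (t (R x) (R y) z + t (R x) y (R z) + t x (R y) (R z))

def IsNij {K : Type*} [Field K] {A : Type*} [AddCommGroup A] [Module K A]
    (t : A → A → A → A) (N : A →ₗ[K] A) : Prop :=
  ∀ x y z, t (N x) (N y) (N z) =
    N (t (N x) (N y) z) + N (t x (N y) (N z)) + N (t (N x) y (N z))
      - N (N (t (N x) y z)) - N (N (t x (N y) z)) - N (N (t x y (N z)))
      + N (N (N (t x y z)))

def Mixed {K : Type*} [Field K] {L V : Type*} [AddCommGroup L] [Module K L]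
    [AddCommGroup V] [Module K V]
    (t : L → L → L → L) (l m r : L → L → V → V) (A B : V →ₗ[K] L) : Prop :=
  ∀ u v w, t (A u) (A v) (B w) + t (A u) (B v) (A w) + t (B u) (A v) (A w) =
    A (l (A u) (B v) w + m (A u) (B w) v + r (A v) (B w) u)
      + A (l (B u) (A v) w + m (B u) (A w) v + r (B v) (A w) u)
      + B (l (A u) (A v) w + m (A u) (A w) v + r (A v) (A w) u)

set_option maxHeartbeats 2000000 in
theorem stmt6 {K : Type*} [Field K] [CharZero K] {L V : Type*} [AddCommGroup L]
    [Module K L] [AddCommGroup V] [Module K V]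
    (t : L → L → L → L) (l m r : L → L → V → V)
    (hL : IsLTS K t) (hrep : IsRep K t l m r)
    (T₁ T₂ : V →ₗ[K] L) (hT₁ : IsRRB t l m r T₁) (hT₂ : IsRRB t l m r T₂) :
    (∀ lam eta : K, IsRRB t l m r (lam • T₁ + eta • T₂)) ↔
      (Mixed t l m r T₁ T₂ ∧ Mixed t l m r T₂ T₁) := by
  obtain ⟨⟨ht1, ht2, ht3⟩, -⟩ := hL
  obtain ⟨⟨hs1, hs2, hs3⟩, -⟩ := hrep
  have tA1 : ∀ (x x' y z : L), t (x + x') y z = t x y z + t x' y z :=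
    fun x x' y z => (ht1 y z).map_add x x'
  have tS1 : ∀ (c : K) (x y z : L), t (c • x) y z = c • t x y z :=
    fun c x y z => (ht1 y z).map_smul c x
  have tA2 : ∀ (x y y' z : L), t x (y + y') z = t x y z + t x y' z :=
    fun x y y' z => (ht2 x z).map_add y y'
  have tS2 : ∀ (c : K) (x y z : L), t x (c • y) z = c • t x y z :=
    fun c x y z => (ht2 x z).map_smul c y
  have tA3 : ∀ (x y z z' : L), t x y (z + z') = t x y z + t x y z' :=
    fun x y z z' => (ht3 x y).map_add z z'
  have tS3 : ∀ (c : K) (x y z : L), t x y (c • z) = c • t x y z :=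
    fun c x y z => (ht3 x y).map_smul c z
  have Z1 : ∀ (q1 s1 : L) (q2 s2 : V), l 0 q1 s2 + m 0 s1 q2 + r q1 s1 0 = 0 := by
    intro q1 s1 q2 s2
    have e : (IsLinearMap.mk' _ (hs1 (q1, q2) (s1, s2))) (0 : L × V) = 0 := map_zero _
    simp only [IsLinearMap.mk'_apply] at e
    simpa [sd] using congrArg Prod.snd e
  have Z2 : ∀ (p1 s1 : L) (p2 s2 : V), l p1 0 s2 + m p1 s1 0 + r 0 s1 p2 = 0 := by
    intro p1 s1 p2 s2
    have e : (IsLinearMap.mk' _ (hs2 (p1, p2) (s1, s2))) (0 : L × V) = 0 := map_zero _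
    simp only [IsLinearMap.mk'_apply] at e
    simpa [sd] using congrArg Prod.snd e
  have Z3 : ∀ (p1 q1 : L) (p2 q2 : V), l p1 q1 0 + m p1 0 q2 + r q1 0 p2 = 0 := by
    intro p1 q1 p2 q2
    have e : (IsLinearMap.mk' _ (hs3 (p1, p2) (q1, q2))) (0 : L × V) = 0 := map_zero _
    simp only [IsLinearMap.mk'_apply] at e
    simpa [sd] using congrArg Prod.snd e
  have E1 : ∀ (a b c : K) (x x' x'' Y Z : L) (p p' p'' vv ww : V),
      l (a • x + b • x' + c • x'') Y ww + m (a • x + b • x' + c • x'') Z vv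
        + r Y Z (a • p + b • p' + c • p'')
      = a • (l x Y ww + m x Z vv + r Y Z p) + b • (l x' Y ww + m x' Z vv + r Y Z p')
        + c • (l x'' Y ww + m x'' Z vv + r Y Z p'') := by
    intro a b c x x' x'' Y Z p p' p'' vv ww
    have e : (IsLinearMap.mk' _ (hs1 (Y, vv) (Z, ww))) (a • (x, p) + b • (x', p') + c • (x'', p''))
        = a • (IsLinearMap.mk' _ (hs1 (Y, vv) (Z, ww))) (x, p) + b • (IsLinearMap.mk' _ (hs1 (Y, vv) (Z, ww))) (x', p')
          + c • (IsLinearMap.mk' _ (hs1 (Y, vv) (Z, ww))) (x'', p'') := by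
      simp only [map_add, map_smul]
    simp only [IsLinearMap.mk'_apply] at e
    simpa [sd] using congrArg Prod.snd e
  have E2 : ∀ (a b c : K) (y y' y'' x Z : L) (vv vv' vv'' p ww : V),
      l x (a • y + b • y' + c • y'') ww + m x Z (a • vv + b • vv' + c • vv'')
        + r (a • y + b • y' + c • y'') Z p
      = a • (l x y ww + m x Z vv + r y Z p) + b • (l x y' ww + m x Z vv' + r y' Z p)
        + c • (l x y'' ww + m x Z vv'' + r y'' Z p) := by
    intro a b c y y' y'' x Z vv vv' vv'' p ww
    have e : (IsLinearMap.mk' _ (hs2 (x, p) (Z, ww))) (a • (y, vv) + b • (y', vv') + c • (y'', vv''))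
        = a • (IsLinearMap.mk' _ (hs2 (x, p) (Z, ww))) (y, vv) + b • (IsLinearMap.mk' _ (hs2 (x, p) (Z, ww))) (y', vv')
          + c • (IsLinearMap.mk' _ (hs2 (x, p) (Z, ww))) (y'', vv'') := by
      simp only [map_add, map_smul]
    simp only [IsLinearMap.mk'_apply] at e
    simpa [sd] using congrArg Prod.snd e
  have E3 : ∀ (a b c : K) (z z' z'' x y : L) (ww ww' ww'' vv p : V),
      l x y (a • ww + b • ww' + c • ww'') + m x (a • z + b • z' + c • z'') vv
        + r y (a • z + b • z' + c • z'') p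
      = a • (l x y ww + m x z vv + r y z p) + b • (l x y ww' + m x z' vv + r y z' p)
        + c • (l x y ww'' + m x z'' vv + r y z'' p) := by
    intro a b c z z' z'' x y ww ww' ww'' vv p
    have e : (IsLinearMap.mk' _ (hs3 (x, p) (y, vv))) (a • (z, ww) + b • (z', ww') + c • (z'', ww''))
        = a • (IsLinearMap.mk' _ (hs3 (x, p) (y, vv))) (z, ww) + b • (IsLinearMap.mk' _ (hs3 (x, p) (y, vv))) (z', ww')
          + c • (IsLinearMap.mk' _ (hs3 (x, p) (y, vv))) (z'', ww'') := by
      simp only [map_add, map_smul]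
    simp only [IsLinearMap.mk'_apply] at e
    simpa [sd] using congrArg Prod.snd e

  -- key identity
  have key : ∀ (lam eta : K) (u v w : V),
      t (lam • T₁ u + eta • T₂ u) (lam • T₁ v + eta • T₂ v) (lam • T₁ w + eta • T₂ w)
        = lam • T₁ (l (lam • T₁ u + eta • T₂ u) (lam • T₁ v + eta • T₂ v) w + m (lam • T₁ u + eta • T₂ u) (lam • T₁ w + eta • T₂ w) v + r (lam • T₁ v + eta • T₂ v) (lam • T₁ w + eta • T₂ w) u) + eta • T₂ (l (lam • T₁ u + eta • T₂ u) (lam • T₁ v + eta • T₂ v) w + m (lam • T₁ u + eta • T₂ u) (lam • T₁ w + eta • T₂ w) v + r (lam • T₁ v + eta • T₂ v) (lam • T₁ w + eta • T₂ w) u)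
          + (lam ^ 2 * eta) • (t (T₁ u) (T₁ v) (T₂ w) + t (T₁ u) (T₂ v) (T₁ w) + t (T₂ u) (T₁ v) (T₁ w) - T₁ (l (T₁ u) (T₁ v) w + m (T₁ u) (T₂ w) v + r (T₁ v) (T₂ w) u) - T₁ (l (T₁ u) (T₂ v) w + m (T₁ u) (T₁ w) v + r (T₂ v) (T₁ w) u) - T₁ (l (T₂ u) (T₁ v) w + m (T₂ u) (T₁ w) v + r (T₁ v) (T₁ w) u) + T₁ (l (T₁ u) (T₁ v) w + m (T₁ u) (T₁ w) v + r (T₁ v) (T₁ w) u) - T₂ (l (T₁ u) (T₁ v) w + m (T₁ u) (T₁ w) v + r (T₁ v) (T₁ w) u))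
          + (lam * eta ^ 2) • (t (T₂ u) (T₂ v) (T₁ w) + t (T₂ u) (T₁ v) (T₂ w) + t (T₁ u) (T₂ v) (T₂ w) - T₂ (l (T₂ u) (T₂ v) w + m (T₂ u) (T₁ w) v + r (T₂ v) (T₁ w) u) - T₂ (l (T₂ u) (T₁ v) w + m (T₂ u) (T₂ w) v + r (T₁ v) (T₂ w) u) - T₂ (l (T₁ u) (T₂ v) w + m (T₁ u) (T₂ w) v + r (T₂ v) (T₂ w) u) + T₂ (l (T₂ u) (T₂ v) w + m (T₂ u) (T₂ w) v + r (T₂ v) (T₂ w) u) - T₁ (l (T₂ u) (T₂ v) w + m (T₂ u) (T₂ w) v + r (T₂ v) (T₂ w) u)) := by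
    intro lam eta u v w
    have zx : ∀ x : L, l x 0 w + m x 0 v + r 0 0 u = 0 := fun x => by
      linear_combination (norm := module) Z2 x 0 u w + Z3 x 0 u v - Z3 x 0 u 0
    have zy : ∀ y : L, l 0 y w + m 0 0 v + r y 0 u = 0 := fun y => by
      linear_combination (norm := module) Z1 y 0 v w + Z3 0 y u v - Z1 y 0 v 0
    have zz : ∀ z : L, l 0 0 w + m 0 z v + r 0 z u = 0 := fun z => by
      linear_combination (norm := module) Z1 0 z v w + Z2 0 z u w - Z1 0 z 0 w
    have Pw : ∀ x y z : L,
        (l x y w + m x 0 v + r y 0 u) + (l x 0 w + m x z v + r 0 z u)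
          + (l 0 y w + m 0 z v + r y z u) = l x y w + m x z v + r y z u := fun x y z => by
      linear_combination (norm := module) zx x + zy y + zz z - zx 0
    have zxT : ∀ (T : V →ₗ[K] L) (x : L), T (l x 0 w) + T (m x 0 v) + T (r 0 0 u) = 0 :=
      fun T x => by
        have h := congrArg T (zx x)
        simp only [map_add, map_zero] at h
        exact h
    have zyT : ∀ (T : V →ₗ[K] L) (y : L), T (l 0 y w) + T (m 0 0 v) + T (r y 0 u) = 0 :=
      fun T y => by
        have h := congrArg T (zy y)
        simp only [map_add, map_zero] at h
        exact h
    have zzT : ∀ (T : V →ₗ[K] L) (z : L), T (l 0 0 w) + T (m 0 z v) + T (r 0 z u) = 0 :=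
      fun T z => by
        have h := congrArg T (zz z)
        simp only [map_add, map_zero] at h
        exact h
    have PT : ∀ (T : V →ₗ[K] L) (x y z : L),
        (T (l x y w) + T (m x 0 v) + T (r y 0 u)) + (T (l x 0 w) + T (m x z v) + T (r 0 z u))
          + (T (l 0 y w) + T (m 0 z v) + T (r y z u))
          = T (l x y w) + T (m x z v) + T (r y z u) := fun T x y z => by
      have h := congrArg T (Pw x y z)
      simp only [map_add] at h
      exact h
    have H1 : t (T₁ u) (T₁ v) (T₁ w)
        = T₁ (l (T₁ u) (T₁ v) w) + T₁ (m (T₁ u) (T₁ w) v) + T₁ (r (T₁ v) (T₁ w) u) := by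
      have h := hT₁ u v w
      simp only [map_add] at h
      exact h
    have H2 : t (T₂ u) (T₂ v) (T₂ w)
        = T₂ (l (T₂ u) (T₂ v) w) + T₂ (m (T₂ u) (T₂ w) v) + T₂ (r (T₂ v) (T₂ w) u) := by
      have h := hT₂ u v w
      simp only [map_add] at h
      exact h
    have fixX : lam • T₁ u + eta • T₂ u + (1 - lam - eta) • (0 : L)
        = lam • T₁ u + eta • T₂ u := by module
    have fixY : lam • T₁ v + eta • T₂ v + (1 - lam - eta) • (0 : L)
        = lam • T₁ v + eta • T₂ v := by module
    have fixZ : lam • T₁ w + eta • T₂ w + (1 - lam - eta) • (0 : L)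
        = lam • T₁ w + eta • T₂ w := by module
    have fixu : lam • u + eta • u + (1 - lam - eta) • u = u := by module
    have fixv : lam • v + eta • v + (1 - lam - eta) • v = v := by module
    have fixw : lam • w + eta • w + (1 - lam - eta) • w = w := by module
    have e1 := E1 lam eta (1 - lam - eta) (T₁ u) (T₂ u) 0 (lam • T₁ v + eta • T₂ v) (lam • T₁ w + eta • T₂ w) u u u v w
    rw [fixX, fixu] at e1
    have e2_1 := E2 lam eta (1 - lam - eta) (T₁ v) (T₂ v) 0 (T₁ u) (lam • T₁ w + eta • T₂ w) v v v u w
    rw [fixY, fixv] at e2_1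
    have e2_2 := E2 lam eta (1 - lam - eta) (T₁ v) (T₂ v) 0 (T₂ u) (lam • T₁ w + eta • T₂ w) v v v u w
    rw [fixY, fixv] at e2_2
    have e2_0 := E2 lam eta (1 - lam - eta) (T₁ v) (T₂ v) 0 0 (lam • T₁ w + eta • T₂ w) v v v u w
    rw [fixY, fixv] at e2_0
    have e3_11 := E3 lam eta (1 - lam - eta) (T₁ w) (T₂ w) 0 (T₁ u) (T₁ v) w w w v u
    rw [fixZ, fixw] at e3_11
    have e3_12 := E3 lam eta (1 - lam - eta) (T₁ w) (T₂ w) 0 (T₁ u) (T₂ v) w w w v u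
    rw [fixZ, fixw] at e3_12
    have e3_10 := E3 lam eta (1 - lam - eta) (T₁ w) (T₂ w) 0 (T₁ u) 0 w w w v u
    rw [fixZ, fixw] at e3_10
    have e3_21 := E3 lam eta (1 - lam - eta) (T₁ w) (T₂ w) 0 (T₂ u) (T₁ v) w w w v u
    rw [fixZ, fixw] at e3_21
    have e3_22 := E3 lam eta (1 - lam - eta) (T₁ w) (T₂ w) 0 (T₂ u) (T₂ v) w w w v u
    rw [fixZ, fixw] at e3_22
    have e3_20 := E3 lam eta (1 - lam - eta) (T₁ w) (T₂ w) 0 (T₂ u) 0 w w w v u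
    rw [fixZ, fixw] at e3_20
    have e3_01 := E3 lam eta (1 - lam - eta) (T₁ w) (T₂ w) 0 0 (T₁ v) w w w v u
    rw [fixZ, fixw] at e3_01
    have e3_02 := E3 lam eta (1 - lam - eta) (T₁ w) (T₂ w) 0 0 (T₂ v) w w w v u
    rw [fixZ, fixw] at e3_02
    have e3_00 := E3 lam eta (1 - lam - eta) (T₁ w) (T₂ w) 0 0 0 w w w v u
    rw [fixZ, fixw] at e3_00
    have hI := e1
    rw [e2_1, e2_2, e2_0] at hI
    rw [e3_11, e3_12, e3_10, e3_21, e3_22, e3_20, e3_01, e3_02, e3_00] at hI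
    rw [hI]
    simp only [map_add, map_smul, map_zero]
    simp only [tA1, tS1, tA2, tS2, tA3, tS3]
    linear_combination (norm := module)
      (lam^3 : K) • (H1)
      + (eta^3 : K) • (H2)
      + (lam^2*eta - lam^3 + lam^4 : K) • (PT T₁ (T₁ u) (T₁ v) (T₁ w))
      + (-lam^2*eta + lam^3*eta : K) • (PT T₁ (T₁ u) (T₁ v) (T₂ w))
      + (-lam^2*eta + lam^3*eta : K) • (PT T₁ (T₁ u) (T₂ v) (T₁ w))
      + (lam^2*eta^2 : K) • (PT T₁ (T₁ u) (T₂ v) (T₂ w))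
      + (-lam^2*eta + lam^3*eta : K) • (PT T₁ (T₂ u) (T₁ v) (T₁ w))
      + (lam^2*eta^2 : K) • (PT T₁ (T₂ u) (T₁ v) (T₂ w))
      + (lam^2*eta^2 : K) • (PT T₁ (T₂ u) (T₂ v) (T₁ w))
      + (-lam*eta^2 + lam*eta^3 : K) • (PT T₁ (T₂ u) (T₂ v) (T₂ w))
      + (-lam^2*eta + lam^3*eta : K) • (PT T₂ (T₁ u) (T₁ v) (T₁ w))
      + (lam^2*eta^2 : K) • (PT T₂ (T₁ u) (T₁ v) (T₂ w))
      + (lam^2*eta^2 : K) • (PT T₂ (T₁ u) (T₂ v) (T₁ w))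
      + (-lam*eta^2 + lam*eta^3 : K) • (PT T₂ (T₁ u) (T₂ v) (T₂ w))
      + (lam^2*eta^2 : K) • (PT T₂ (T₂ u) (T₁ v) (T₁ w))
      + (-lam*eta^2 + lam*eta^3 : K) • (PT T₂ (T₂ u) (T₁ v) (T₂ w))
      + (-lam*eta^2 + lam*eta^3 : K) • (PT T₂ (T₂ u) (T₂ v) (T₁ w))
      + (-eta^3 + eta^4 + lam*eta^2 : K) • (PT T₂ (T₂ u) (T₂ v) (T₂ w))
      + (-lam + 3*lam*eta - 3*lam*eta^2 + lam*eta^3 + 3*lam^2 - 6*lam^2*eta + 3*lam^2*eta^2 - 3*lam^3 + 3*lam^3*eta + lam^4 : K) • (zxT T₁ 0)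
      + (-lam^2 + 2*lam^2*eta - lam^2*eta^2 + 2*lam^3 - 2*lam^3*eta - lam^4 : K) • (zzT T₁ (T₁ w))
      + (-lam*eta + 2*lam*eta^2 - lam*eta^3 + 2*lam^2*eta - 2*lam^2*eta^2 - lam^3*eta : K) • (zzT T₁ (T₂ w))
      + (-lam^2 + 2*lam^2*eta - lam^2*eta^2 + 2*lam^3 - 2*lam^3*eta - lam^4 : K) • (zyT T₁ (T₁ v))
      + (-lam*eta + 2*lam*eta^2 - lam*eta^3 + 2*lam^2*eta - 2*lam^2*eta^2 - lam^3*eta : K) • (zyT T₁ (T₂ v))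
      + (-lam^2 + 2*lam^2*eta - lam^2*eta^2 + 2*lam^3 - 2*lam^3*eta - lam^4 : K) • (zxT T₁ (T₁ u))
      + (-lam*eta + 2*lam*eta^2 - lam*eta^3 + 2*lam^2*eta - 2*lam^2*eta^2 - lam^3*eta : K) • (zxT T₁ (T₂ u))
      + (-eta + 3*eta^2 - 3*eta^3 + eta^4 + 3*lam*eta - 6*lam*eta^2 + 3*lam*eta^3 - 3*lam^2*eta + 3*lam^2*eta^2 + lam^3*eta : K) • (zxT T₂ 0)
      + (-lam*eta + 2*lam*eta^2 - lam*eta^3 + 2*lam^2*eta - 2*lam^2*eta^2 - lam^3*eta : K) • (zzT T₂ (T₁ w))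
      + (-eta^2 + 2*eta^3 - eta^4 + 2*lam*eta^2 - 2*lam*eta^3 - lam^2*eta^2 : K) • (zzT T₂ (T₂ w))
      + (-lam*eta + 2*lam*eta^2 - lam*eta^3 + 2*lam^2*eta - 2*lam^2*eta^2 - lam^3*eta : K) • (zyT T₂ (T₁ v))
      + (-eta^2 + 2*eta^3 - eta^4 + 2*lam*eta^2 - 2*lam*eta^3 - lam^2*eta^2 : K) • (zyT T₂ (T₂ v))
      + (-lam*eta + 2*lam*eta^2 - lam*eta^3 + 2*lam^2*eta - 2*lam^2*eta^2 - lam^3*eta : K) • (zxT T₂ (T₁ u))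
      + (-eta^2 + 2*eta^3 - eta^4 + 2*lam*eta^2 - 2*lam*eta^3 - lam^2*eta^2 : K) • (zxT T₂ (T₂ u))
  constructor
  · intro hc
    have main : ∀ u v w : V, (t (T₁ u) (T₁ v) (T₂ w) + t (T₁ u) (T₂ v) (T₁ w) + t (T₂ u) (T₁ v) (T₁ w) - T₁ (l (T₁ u) (T₁ v) w + m (T₁ u) (T₂ w) v + r (T₁ v) (T₂ w) u) - T₁ (l (T₁ u) (T₂ v) w + m (T₁ u) (T₁ w) v + r (T₂ v) (T₁ w) u) - T₁ (l (T₂ u) (T₁ v) w + m (T₂ u) (T₁ w) v + r (T₁ v) (T₁ w) u) + T₁ (l (T₁ u) (T₁ v) w + m (T₁ u) (T₁ w) v + r (T₁ v) (T₁ w) u) - T₂ (l (T₁ u) (T₁ v) w + m (T₁ u) (T₁ w) v + r (T₁ v) (T₁ w) u)) = 0 ∧ (t (T₂ u) (T₂ v) (T₁ w) + t (T₂ u) (T₁ v) (T₂ w) + t (T₁ u) (T₂ v) (T₂ w) - T₂ (l (T₂ u) (T₂ v) w + m (T₂ u) (T₁ w) v + r (T₂ v) (T₁ w) u) - T₂ (l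 (T₂ u) (T₁ v) w + m (T₂ u) (T₂ w) v + r (T₁ v) (T₂ w) u) - T₂ (l (T₁ u) (T₂ v) w + m (T₁ u) (T₂ w) v + r (T₂ v) (T₂ w) u) + T₂ (l (T₂ u) (T₂ v) w + m (T₂ u) (T₂ w) v + r (T₂ v) (T₂ w) u) - T₁ (l (T₂ u) (T₂ v) w + m (T₂ u) (T₂ w) v + r (T₂ v) (T₂ w) u)) = 0 := by
      intro u v w
      have c11 := hc 1 1 u v w
      simp only [LinearMap.add_apply, LinearMap.smul_apply] at c11
      have c1m := hc 1 (-1) u v w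
      simp only [LinearMap.add_apply, LinearMap.smul_apply] at c1m
      have k11 := key 1 1 u v w
      have k1m := key 1 (-1) u v w
      have h0 : (t (T₁ u) (T₁ v) (T₂ w) + t (T₁ u) (T₂ v) (T₁ w) + t (T₂ u) (T₁ v) (T₁ w) - T₁ (l (T₁ u) (T₁ v) w + m (T₁ u) (T₂ w) v + r (T₁ v) (T₂ w) u) - T₁ (l (T₁ u) (T₂ v) w + m (T₁ u) (T₁ w) v + r (T₂ v) (T₁ w) u) - T₁ (l (T₂ u) (T₁ v) w + m (T₂ u) (T₁ w) v + r (T₁ v) (T₁ w) u) + T₁ (l (T₁ u) (T₁ v) w + m (T₁ u) (T₁ w) v + r (T₁ v) (T₁ w) u) - T₂ (l (T₁ u) (T₁ v) w + m (T₁ u) (T₁ w) v + r (T₁ v) (T₁ w) u)) + (t (T₂ u) (T₂ v) (T₁ w) + t (T₂ u) (T₁ v) (T₂ w) + t (T₁ u) (T₂ v) (T₂ w) - T₂ (l (T₂ u) (T₂ v) w + m (T₂ u) (T₁ w) v + r (T₂ v) (T₁ w) u) - T₂ (l (T₂ u) (T₁ v) w + m (T₂ u) (T₂ w) v + r (T₁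 v) (T₂ w) u) - T₂ (l (T₁ u) (T₂ v) w + m (T₁ u) (T₂ w) v + r (T₂ v) (T₂ w) u) + T₂ (l (T₂ u) (T₂ v) w + m (T₂ u) (T₂ w) v + r (T₂ v) (T₂ w) u) - T₁ (l (T₂ u) (T₂ v) w + m (T₂ u) (T₂ w) v + r (T₂ v) (T₂ w) u)) = 0 := by
        linear_combination (norm := module) c11 - k11
      have h0' : -(t (T₁ u) (T₁ v) (T₂ w) + t (T₁ u) (T₂ v) (T₁ w) + t (T₂ u) (T₁ v) (T₁ w) - T₁ (l (T₁ u) (T₁ v) w + m (T₁ u) (T₂ w) v + r (T₁ v) (T₂ w) u) - T₁ (l (T₁ u) (T₂ v) w + m (T₁ u) (T₁ w) v + r (T₂ v) (T₁ w) u) - T₁ (l (T₂ u) (T₁ v) w + m (T₂ u) (T₁ w) v + r (T₁ v) (T₁ w) u) + T₁ (l (T₁ u) (T₁ v) w + m (T₁ u) (T₁ w) v + r (T₁ v) (T₁ w) u) - T₂ (l (T₁ u) (T₁ v) w + m (T₁ u) (T₁ w) v + r (T₁ v) (T₁ w) u)) + (t (T₂ u) (T₂ v) (T₁ w) + t (T₂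 u) (T₁ v) (T₂ w) + t (T₁ u) (T₂ v) (T₂ w) - T₂ (l (T₂ u) (T₂ v) w + m (T₂ u) (T₁ w) v + r (T₂ v) (T₁ w) u) - T₂ (l (T₂ u) (T₁ v) w + m (T₂ u) (T₂ w) v + r (T₁ v) (T₂ w) u) - T₂ (l (T₁ u) (T₂ v) w + m (T₁ u) (T₂ w) v + r (T₂ v) (T₂ w) u) + T₂ (l (T₂ u) (T₂ v) w + m (T₂ u) (T₂ w) v + r (T₂ v) (T₂ w) u) - T₁ (l (T₂ u) (T₂ v) w + m (T₂ u) (T₂ w) v + r (T₂ v) (T₂ w) u)) = 0 := by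
        linear_combination (norm := module) c1m - k1m
      have hB2 : (2 : K) • (t (T₂ u) (T₂ v) (T₁ w) + t (T₂ u) (T₁ v) (T₂ w) + t (T₁ u) (T₂ v) (T₂ w) - T₂ (l (T₂ u) (T₂ v) w + m (T₂ u) (T₁ w) v + r (T₂ v) (T₁ w) u) - T₂ (l (T₂ u) (T₁ v) w + m (T₂ u) (T₂ w) v + r (T₁ v) (T₂ w) u) - T₂ (l (T₁ u) (T₂ v) w + m (T₁ u) (T₂ w) v + r (T₂ v) (T₂ w) u) + T₂ (l (T₂ u) (T₂ v) w + m (T₂ u) (T₂ w) v + r (T₂ v) (T₂ w) u) - T₁ (l (T₂ u) (T₂ v) w + m (T₂ u) (T₂ w) v + r (T₂ v) (T₂ w) u)) = 0 := by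
        linear_combination (norm := module) h0 + h0'
      have hBIG2 : (t (T₂ u) (T₂ v) (T₁ w) + t (T₂ u) (T₁ v) (T₂ w) + t (T₁ u) (T₂ v) (T₂ w) - T₂ (l (T₂ u) (T₂ v) w + m (T₂ u) (T₁ w) v + r (T₂ v) (T₁ w) u) - T₂ (l (T₂ u) (T₁ v) w + m (T₂ u) (T₂ w) v + r (T₁ v) (T₂ w) u) - T₂ (l (T₁ u) (T₂ v) w + m (T₁ u) (T₂ w) v + r (T₂ v) (T₂ w) u) + T₂ (l (T₂ u) (T₂ v) w + m (T₂ u) (T₂ w) v + r (T₂ v) (T₂ w) u) - T₁ (l (T₂ u) (T₂ v) w + m (T₂ u) (T₂ w) v + r (T₂ v) (T₂ w) u)) = 0 := by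
        rcases smul_eq_zero.mp hB2 with h | h
        · exact absurd h two_ne_zero
        · exact h
      have hBIG1 : (t (T₁ u) (T₁ v) (T₂ w) + t (T₁ u) (T₂ v) (T₁ w) + t (T₂ u) (T₁ v) (T₁ w) - T₁ (l (T₁ u) (T₁ v) w + m (T₁ u) (T₂ w) v + r (T₁ v) (T₂ w) u) - T₁ (l (T₁ u) (T₂ v) w + m (T₁ u) (T₁ w) v + r (T₂ v) (T₁ w) u) - T₁ (l (T₂ u) (T₁ v) w + m (T₂ u) (T₁ w) v + r (T₁ v) (T₁ w) u) + T₁ (l (T₁ u) (T₁ v) w + m (T₁ u) (T₁ w) v + r (T₁ v) (T₁ w) u) - T₂ (l (T₁ u) (T₁ v) w + m (T₁ u) (T₁ w) v + r (T₁ v) (T₁ w) u)) = 0 := by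
        linear_combination (norm := module) h0 - hBIG2
      exact ⟨hBIG1, hBIG2⟩
    constructor
    · intro u v w
      have hd := (main u v w).1
      simp only [map_add] at hd ⊢
      linear_combination (norm := module) hd
    · intro u v w
      have hd := (main u v w).2
      simp only [map_add] at hd ⊢
      linear_combination (norm := module) hd
  · rintro ⟨h12, h21⟩ lam eta u v w
    simp only [LinearMap.add_apply, LinearMap.smul_apply]
    have hd1 : (t (T₁ u) (T₁ v) (T₂ w) + t (T₁ u) (T₂ v) (T₁ w) + t (T₂ u) (T₁ v) (T₁ w) - T₁ (l (T₁ u) (T₁ v) w + m (T₁ u) (T₂ w) v + r (T₁ v) (T₂ w) u) - T₁ (l (T₁ u) (T₂ v) w + m (T₁ u) (T₁ w) v + r (T₂ v) (T₁ w) u) - T₁ (l (T₂ u) (T₁ v) w + m (T₂ u) (T₁ w) v + r (T₁ v) (T₁ w) u) + T₁ (l (T₁ u) (T₁ v) w + m (T₁ u) (T₁ w) v + r (T₁ v) (T₁ w) u) - T₂ (l (T₁ u) (T₁ v) w + m (T₁ u) (T₁ w) v + r (T₁ v) (T₁ w) u)) = 0 := by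
      have h := h12 u v w
      simp only [map_add] at h ⊢
      linear_combination (norm := module) h
    have hd2 : (t (T₂ u) (T₂ v) (T₁ w) + t (T₂ u) (T₁ v) (T₂ w) + t (T₁ u) (T₂ v) (T₂ w) - T₂ (l (T₂ u) (T₂ v) w + m (T₂ u) (T₁ w) v + r (T₂ v) (T₁ w) u) - T₂ (l (T₂ u) (T₁ v) w + m (T₂ u) (T₂ w) v + r (T₁ v) (T₂ w) u) - T₂ (l (T₁ u) (T₂ v) w + m (T₁ u) (T₂ w) v + r (T₂ v) (T₂ w) u) + T₂ (l (T₂ u) (T₂ v) w + m (T₂ u) (T₂ w) v + r (T₂ v) (T₂ w) u) - T₁ (l (T₂ u) (T₂ v) w + m (T₂ u) (T₂ w) v + r (T₂ v) (T₂ w) u)) = 0 := by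
      have h := h21 u v w
      simp only [map_add] at h ⊢
      linear_combination (norm := module) h
    have k := key lam eta u v w
    rw [hd1, hd2, smul_zero, smul_zero, add_zero, add_zero] at k
    exact k
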